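/- For every integer m ≥ 2 and every k with 1 ≤ k ≤ m, the number 2·cos(kπ/(m+1)) is a double root of F_m(x) = Σ_{j=0}^{m} V_{2j}(x), i.e., both F_m and its derivative vanish at 2·cos(kπ/(m+1)). -/

import Mathlib

open Real

noncomputable def chebV (m : ℕ) (x : ℝ) : ℝ := (Polynomial.Chebyshev.U ℝ m).eval (x / 2)

noncomputable def chebF (m : ℕ) (x : ℝ) : ℝ := ∑ j ∈ Finset.range (m + 1), chebV (2 * j) x

lemma sin_sq_sub_sin_sq (A B : ℝ) :
    Real.sin (A + B) * Real.sin (A - B) = Real.sin A ^ 2 - Real.sin B ^ 2 := by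
  rw [Real.sin_add, Real.sin_sub]
  nlinarith [Real.sin_sq_add_cos_sq A, Real.sin_sq_add_cos_sq B]

lemma sum_U_eval (m : ℕ) (θ : ℝ) :
    (∑ j ∈ Finset.range (m + 1),
      (Polynomial.Chebyshev.U ℝ (2 * (j : ℤ))).eval (Real.cos θ)) * Real.sin θ ^ 2 =
    Real.sin ((m + 1) * θ) ^ 2 := by
  induction m with
  | zero => simp [sq]
  | succ n ih =>
    rw [Finset.sum_range_succ, add_mul, ih]
    have h := Polynomial.Chebyshev.U_real_cos θ (2 * (n + 1 : ℤ))
    have h' : (Polynomial.Chebyshev.U ℝ (2 * (n + 1 : ℤ))).eval (Real.cos θ)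
        * Real.sin θ ^ 2 = Real.sin (((2 * (n + 1 : ℤ) : ℤ) + 1 : ℝ) * θ) * Real.sin θ := by
      rw [sq, ← mul_assoc, h]
    have key : Real.sin ((n + 1 + 1 : ℝ) * θ) ^ 2 - Real.sin ((n + 1 : ℝ) * θ) ^ 2
        = Real.sin (((n + 1 + 1 : ℝ) * θ) + ((n + 1 : ℝ) * θ))
          * Real.sin (((n + 1 + 1 : ℝ) * θ) - ((n + 1 : ℝ) * θ)) :=
      (sin_sq_sub_sin_sq _ _).symm
    push_cast at h' key ⊢
    ring_nf at h' key ⊢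
    linarith [h', key]

lemma sum_U_poly (m : ℕ) :
    (∑ j ∈ Finset.range (m + 1), Polynomial.Chebyshev.U ℝ (2 * (j : ℤ))) =
      (Polynomial.Chebyshev.U ℝ (m : ℤ)) ^ 2 := by
  apply Polynomial.eq_of_infinite_eval_eq
  apply Set.Infinite.mono (s := Set.Ioo (-1 : ℝ) 1)
  · intro x hx
    have hx1 : -1 < x := hx.1
    have hx2 : x < 1 := hx.2
    set θ := Real.arccos x with hθ
    have hcos : Real.cos θ = x := Real.cos_arccos hx1.le hx2.le
    have hsinpos : 0 < Real.sin θ := by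
      rw [hθ, Real.sin_arccos]
      exact Real.sqrt_pos.2 (by nlinarith)
    have hsq : Real.sin θ ^ 2 ≠ 0 := pow_ne_zero 2 hsinpos.ne'
    have h1 := sum_U_eval m θ
    have h2 := Polynomial.Chebyshev.U_real_cos θ (m : ℤ)
    push_cast at h2
    rw [hcos] at h1 h2
    simp only [Set.mem_setOf_eq, Polynomial.eval_finset_sum, Polynomial.eval_pow]
    apply mul_right_cancel₀ hsq
    rw [h1, ← h2]
    ring
  · exact Set.Ioo_infinite (by norm_num)

lemma chebF_eq_sq (m : ℕ) (x : ℝ) : chebF m x = (chebV m x) ^ 2 := by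
  unfold chebF chebV
  have := congrArg (Polynomial.eval (x / 2)) (sum_U_poly m)
  simpa [Polynomial.eval_finset_sum] using this

/-- For `m ≥ 2` and `1 ≤ k ≤ m`, the number `2 cos (kπ/(m+1))` is a double root of `F_m`:
both `F_m` and its derivative vanish there. -/
theorem chebF_double_root (m k : ℕ) (hm : 2 ≤ m) (hk1 : 1 ≤ k) (hkm : k ≤ m) :
    chebF m (2 * Real.cos (k * π / (m + 1))) = 0 ∧
    deriv (chebF m) (2 * Real.cos (k * π / (m + 1))) = 0 := by
  set θ := (k : ℝ) * π / (m + 1) with hθdef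
  set x0 := 2 * Real.cos θ with hx0
  have hm1 : (0 : ℝ) < (m : ℝ) + 1 := by positivity
  have hV : chebV m x0 = 0 := by
    have h2 := Polynomial.Chebyshev.U_real_cos θ (m : ℤ)
    have hθ1 : 0 < θ := by
      apply div_pos (mul_pos _ Real.pi_pos) hm1
      exact_mod_cast Nat.pos_of_ne_zero (by omega)
    have hθ2 : θ < π := by
      rw [hθdef, div_lt_iff₀ hm1]
      have : (k : ℝ) < (m : ℝ) + 1 := by exact_mod_cast Nat.lt_succ_of_le hkm
      nlinarith [Real.pi_pos]
    have hsin : Real.sin θ ≠ 0 := ne_of_gt (Real.sin_pos_of_pos_of_lt_pi hθ1 hθ2)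
    have hval : ((m : ℤ) + 1 : ℝ) * θ = (k : ℝ) * π := by
      rw [hθdef]
      field_simp
      simp
    rw [hval] at h2
    have : Real.sin ((k : ℝ) * π) = 0 := Real.sin_nat_mul_pi k
    rw [this] at h2
    have hU : (Polynomial.Chebyshev.U ℝ (m : ℤ)).eval (Real.cos θ) = 0 :=
      (mul_eq_zero.1 h2).resolve_right hsin
    unfold chebV
    rw [hx0]
    convert hU using 2
    ring
  constructor
  · rw [chebF_eq_sq, hV]; ring
  · have hfun : chebF m = fun x => (chebV m x) ^ 2 := funext (chebF_eq_sq m)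
    rw [hfun]
    have hd : HasDerivAt (fun x : ℝ => chebV m x)
        ((Polynomial.Chebyshev.U ℝ (m : ℤ)).derivative.eval (x0 / 2) * (1 / 2)) x0 := by
      have h1 : HasDerivAt (fun x : ℝ => x / 2) (1 / 2) x0 := by
        simpa using (hasDerivAt_id x0).div_const 2
      exact (Polynomial.hasDerivAt (Polynomial.Chebyshev.U ℝ (m : ℤ)) (x0 / 2)).comp x0 h1
    have hd2 := hd.pow 2
    rw [show (fun x => chebV m x ^ 2) = (fun x => chebV m x) ^ 2 from rfl, hd2.deriv, hV]
    ring
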